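/- arXiv:1306.4442 — 6 statements merged into one kernel-verified Lean document; each statement's English description precedes it below -/
import Mathlib

section
/- Let θ < 0, β ∈ (0,1), x ∈ ℕ, and let (q_k)_{k∈ℤ} be nonnegative reals with Σ_{k∈ℤ} q_k = 1. Then for every a ∈ {0,1,...,x}: e^{θa} · ( Σ_{k ≥ a−x} e^{θβ(x−a+k)} q_k + Σ_{k ≤ a−x−1} q_k ) ≥ e^{θx} · Σ_{k∈ℤ} e^{θβ·max(k,0)} q_k. -/
open Real

theorem stmt0 (θ β : ℝ) (hθ : θ < 0) (hβ0 : 0 < β) (hβ1 : β < 1)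
    (x : ℕ) (q : ℤ → ℝ) (hq : ∀ k, 0 ≤ q k) (hsum : HasSum q 1)
    (a : ℕ) (ha : a ≤ x) :
    Real.exp (θ * x) * ∑' k : ℤ, Real.exp (θ * β * max (k : ℝ) 0) * q k ≤
      Real.exp (θ * a) *
        ((∑' k : ℤ, if (a : ℤ) - x ≤ k then Real.exp (θ * β * ((x : ℝ) - a + k)) * q k else 0)
          + ∑' k : ℤ, if k ≤ (a : ℤ) - x - 1 then q k else 0) := by
  have hqsum : Summable q := hsum.summable
  set g : ℤ → ℝ := fun k =>
    if (a : ℤ) - x ≤ k then Real.exp (θ * β * ((x : ℝ) - a + k)) * q k else 0 with hg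
  set g' : ℤ → ℝ := fun k => if k ≤ (a : ℤ) - x - 1 then q k else 0 with hg'
  set h : ℤ → ℝ := fun k => Real.exp (θ * β * max (k : ℝ) 0) * q k with hh
  have hax : (a : ℝ) ≤ (x : ℝ) := by exact_mod_cast ha
  have hgb : ∀ k, 0 ≤ g k ∧ g k ≤ q k := by
    intro k
    simp only [hg]
    split_ifs with hk
    · have hk' : (a : ℝ) - x ≤ (k : ℝ) := by exact_mod_cast hk
      have h1 : Real.exp (θ * β * ((x : ℝ) - a + k)) ≤ 1 := by
        rw [Real.exp_le_one_iff]
        exact mul_nonpos_iff.2 (Or.inr ⟨(mul_neg_of_neg_of_pos hθ hβ0).le, by linarith⟩)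
      constructor
      · exact mul_nonneg (Real.exp_pos _).le (hq k)
      · calc Real.exp (θ * β * ((x : ℝ) - a + k)) * q k ≤ 1 * q k :=
              mul_le_mul_of_nonneg_right h1 (hq k)
          _ = q k := one_mul _
    · exact ⟨le_rfl, hq k⟩
  have hg'b : ∀ k, 0 ≤ g' k ∧ g' k ≤ q k := by
    intro k
    simp only [hg']
    split_ifs with hk
    · exact ⟨hq k, le_rfl⟩
    · exact ⟨le_rfl, hq k⟩
  have hhb : ∀ k, 0 ≤ h k ∧ h k ≤ q k := by
    intro k
    have h1 : Real.exp (θ * β * max (k : ℝ) 0) ≤ 1 := by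
      rw [Real.exp_le_one_iff]
      exact mul_nonpos_iff.2 (Or.inr ⟨(mul_neg_of_neg_of_pos hθ hβ0).le, le_max_right _ _⟩)
    refine ⟨mul_nonneg (Real.exp_pos _).le (hq k), ?_⟩
    calc Real.exp (θ * β * max (k : ℝ) 0) * q k ≤ 1 * q k :=
          mul_le_mul_of_nonneg_right h1 (hq k)
      _ = q k := one_mul _
  have hgsum : Summable g := Summable.of_nonneg_of_le (fun k => (hgb k).1) (fun k => (hgb k).2) hqsum
  have hg'sum : Summable g' := Summable.of_nonneg_of_le (fun k => (hg'b k).1) (fun k => (hg'b k).2) hqsum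
  have hhsum : Summable h := Summable.of_nonneg_of_le (fun k => (hhb k).1) (fun k => (hhb k).2) hqsum
  have key : ∀ k, Real.exp (θ * x) * h k ≤ Real.exp (θ * a) * (g k + g' k) := by
    intro k
    by_cases hk : (a : ℤ) - x ≤ k
    · have hk2 : ¬ k ≤ (a : ℤ) - x - 1 := by omega
      have hk' : (a : ℝ) - x ≤ (k : ℝ) := by exact_mod_cast hk
      simp only [hg, hg', if_pos hk, if_neg hk2, add_zero]
      rw [← mul_assoc, ← mul_assoc, ← Real.exp_add, ← Real.exp_add]
      refine mul_le_mul_of_nonneg_right ?_ (hq k)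
      rw [Real.exp_le_exp]
      have hmk : (k : ℝ) ≤ max (k : ℝ) 0 := le_max_left _ _
      have hm0 : (0 : ℝ) ≤ max (k : ℝ) 0 := le_max_right _ _
      have h2 : (a : ℝ) + β * ((x : ℝ) - a + k) ≤ (x : ℝ) + β * max (k : ℝ) 0 := by
        nlinarith [mul_nonneg (sub_nonneg.2 hax) (sub_nonneg.2 hβ1.le),
          mul_nonneg hβ0.le (sub_nonneg.2 hmk)]
      have h3 := mul_le_mul_of_nonpos_left h2 hθ.le
      nlinarith [h3]
    · have hk2 : k ≤ (a : ℤ) - x - 1 := by omega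
      have hkneg : (k : ℝ) ≤ 0 := by
        have : (k : ℤ) ≤ 0 := by omega
        exact_mod_cast this
      have hmax : max (k : ℝ) 0 = 0 := max_eq_right hkneg
      simp only [hg, hg', hh, if_neg hk, if_pos hk2, zero_add, hmax, mul_zero,
        Real.exp_zero, one_mul]
      refine mul_le_mul_of_nonneg_right ?_ (hq k)
      exact Real.exp_le_exp.2 (by nlinarith)
  calc Real.exp (θ * x) * ∑' k : ℤ, h k
      = ∑' k : ℤ, Real.exp (θ * x) * h k := by rw [tsum_mul_left]
    _ ≤ ∑' k : ℤ, Real.exp (θ * a) * (g k + g' k) := by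
        exact Summable.tsum_le_tsum key (hhsum.mul_left _) ((hgsum.add hg'sum).mul_left _)
    _ = Real.exp (θ * a) * ((∑' k : ℤ, g k) + ∑' k : ℤ, g' k) := by
        rw [tsum_mul_left, Summable.tsum_add hgsum hg'sum]
end

section
/- Fix θ < 0 and let G : ℕ → (0,∞). Define J(x) = min over a ∈ {0,...,x} of e^{θa} G(x−a), and let f(x) be the largest a ∈ {0,...,x} attaining this minimum. Then for every x ∈ ℕ: J(x) = e^{θ f(x)} J(x − f(x)) and f(x − f(x)) = 0. -/
theorem stmt5 (θ : ℝ) (hθ : θ < 0) (G : ℕ → ℝ) (hG : ∀ n, 0 < G n)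
    (J : ℕ → ℝ)
    (hJ : ∀ x : ℕ, J x = (Finset.range (x + 1)).inf'
      (Finset.nonempty_range_iff.mpr (Nat.succ_ne_zero x))
      (fun a => Real.exp (θ * a) * G (x - a)))
    (f : ℕ → ℕ)
    (hf1 : ∀ x, f x ≤ x)
    (hf2 : ∀ x, J x = Real.exp (θ * f x) * G (x - f x))
    (hf3 : ∀ x : ℕ, ∀ a : ℕ, a ≤ x → Real.exp (θ * a) * G (x - a) = J x → a ≤ f x) :
    ∀ x : ℕ, J x = Real.exp (θ * f x) * J (x - f x) ∧ f (x - f x) = 0 := by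
  intro x
  set y := x - f x with hy
  -- J x ≤ each term of its inf
  have hle : ∀ b : ℕ, b ≤ x → J x ≤ Real.exp (θ * b) * G (x - b) := by
    intro b hb
    rw [hJ x]
    exact Finset.inf'_le _ (Finset.mem_range.mpr (Nat.lt_succ_of_le hb))
  -- J y ≤ G y
  have h1 : J y ≤ G y := by
    have h := hle 0 (by omega) -- wrong x; do directly
    rw [hJ y]
    have h0 : (0:ℕ) ∈ Finset.range (y + 1) := Finset.mem_range.mpr (Nat.succ_pos y)
    calc (Finset.range (y+1)).inf' _ (fun a => Real.exp (θ * a) * G (y - a))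
        ≤ Real.exp (θ * (0:ℕ)) * G (y - 0) := Finset.inf'_le _ h0
      _ = G y := by simp
  -- G y ≤ J y
  have h2 : G y ≤ J y := by
    rw [hJ y]
    apply Finset.le_inf'
    intro a ha
    have ha' : a ≤ y := Nat.lt_succ_iff.mp (Finset.mem_range.mp ha)
    have hfa : f x + a ≤ x := by
      have := hf1 x; omega
    have key := hle (f x + a) hfa
    rw [hf2 x] at key
    have hsub : x - (f x + a) = y - a := by omega
    rw [hsub, Nat.cast_add, mul_add, Real.exp_add, mul_assoc] at key
    have hx0 : (0:ℝ) < Real.exp (θ * f x) := Real.exp_pos _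
    exact le_of_mul_le_mul_left key hx0
  have hJy : J y = G y := le_antisymm h1 h2
  constructor
  · rw [hJy]; exact hf2 x
  · -- f y = 0
    have hfy := hf2 y
    -- exp(θ f y) G (y - f y) = J y = G y
    have hcand : Real.exp (θ * ((f x + f y : ℕ) : ℝ)) * G (x - (f x + f y)) = J x := by
      have hsub : x - (f x + f y) = y - f y := by
        have := hf1 x; have := hf1 y; omega
      rw [hsub, Nat.cast_add, mul_add, Real.exp_add, mul_assoc, ← hfy, hJy,
        hf2 x]
    have hfx2 : f x + f y ≤ x := by
      have := hf1 x; have := hf1 y; omega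
    have := hf3 x (f x + f y) hfx2 hcand
    omega
end

section
/- Fix θ < 0 and let G : ℕ → (0,∞). Define J(x) = min over a ∈ {0,...,x} of e^{θa} G(x−a), and let f(x) be the largest minimiser. If x₀ ∈ ℕ satisfies f(x₀) = a₀ and f(x₀+1) > 0, then f(x₀+1) = a₀ + 1. -/
theorem stmt6 (θ : ℝ) (hθ : θ < 0) (G : ℕ → ℝ) (hG : ∀ n, 0 < G n)
    (J : ℕ → ℝ)
    (hJ : ∀ x : ℕ, J x = (Finset.range (x + 1)).inf'
      (Finset.nonempty_range_iff.mpr (Nat.succ_ne_zero x))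
      (fun a => Real.exp (θ * a) * G (x - a)))
    (f : ℕ → ℕ)
    (hf1 : ∀ x, f x ≤ x)
    (hf2 : ∀ x, J x = Real.exp (θ * f x) * G (x - f x))
    (hf3 : ∀ x : ℕ, ∀ a : ℕ, a ≤ x → Real.exp (θ * a) * G (x - a) = J x → a ≤ f x)
    (x₀ a₀ : ℕ) (h0 : f x₀ = a₀) (h1 : 0 < f (x₀ + 1)) :
    f (x₀ + 1) = a₀ + 1 := by
  set b := f (x₀ + 1) with hb
  have hbx : b ≤ x₀ + 1 := hf1 (x₀ + 1)
  have ha₀x : a₀ ≤ x₀ := h0 ▸ hf1 x₀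
  -- value of action a₀+1 at x₀+1 equals e^θ * J x₀
  have hval : Real.exp (θ * ((a₀ + 1 : ℕ) : ℝ)) * G ((x₀ + 1) - (a₀ + 1))
      = Real.exp θ * J x₀ := by
    rw [hf2 x₀, h0]
    have : (x₀ + 1) - (a₀ + 1) = x₀ - a₀ := by omega
    rw [this]
    push_cast
    rw [mul_add, mul_one, Real.exp_add]
    ring
  -- J (x₀+1) ≤ value at a₀+1
  have hle1 : J (x₀ + 1) ≤ Real.exp θ * J x₀ := by
    rw [← hval, hJ (x₀ + 1)]
    exact Finset.inf'_le _ (Finset.mem_range.mpr (by omega))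
  -- J x₀ ≤ value at b-1 (at level x₀)
  have hle2 : J x₀ ≤ Real.exp (θ * ((b - 1 : ℕ) : ℝ)) * G (x₀ - (b - 1)) := by
    rw [hJ x₀]
    exact Finset.inf'_le _ (Finset.mem_range.mpr (by omega))
  -- J (x₀+1) = e^θ * value at b-1
  have hJb : J (x₀ + 1) = Real.exp θ * (Real.exp (θ * ((b - 1 : ℕ) : ℝ)) * G (x₀ - (b - 1))) := by
    rw [hf2 (x₀ + 1), ← hb]
    have h2 : (x₀ + 1) - b = x₀ - (b - 1) := by omega
    have h3 : ((b : ℕ) : ℝ) = ((b - 1 : ℕ) : ℝ) + 1 := by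
      push_cast [Nat.cast_sub h1]; ring
    rw [h2, h3, mul_add, mul_one, Real.exp_add]
    ring
  have hpos : (0 : ℝ) < Real.exp θ := Real.exp_pos θ
  -- equality: value at b-1 = J x₀
  have heq : Real.exp (θ * ((b - 1 : ℕ) : ℝ)) * G (x₀ - (b - 1)) = J x₀ := by
    have h4 : Real.exp θ * (Real.exp (θ * ((b - 1 : ℕ) : ℝ)) * G (x₀ - (b - 1)))
        ≤ Real.exp θ * J x₀ := by rw [← hJb]; exact hle1
    have h5 := (mul_le_mul_iff_right₀ hpos).mp h4
    linarith
  have hb1 : b - 1 ≤ f x₀ := hf3 x₀ (b - 1) (by omega) heq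
  -- a₀+1 attains J (x₀+1)
  have heq2 : Real.exp (θ * ((a₀ + 1 : ℕ) : ℝ)) * G ((x₀ + 1) - (a₀ + 1)) = J (x₀ + 1) := by
    rw [hval]
    have h6 : Real.exp θ * J x₀ ≤ J (x₀ + 1) := by
      rw [hJb]
      exact (mul_le_mul_iff_right₀ hpos).mpr hle2
    linarith
  have hb2 : a₀ + 1 ≤ b := hf3 (x₀ + 1) (a₀ + 1) (by omega) heq2
  rw [h0] at hb1
  omega
end

section
/- Fix θ < 0 and let G : ℕ → (0,∞). Define J(x) = min over a ∈ {0,...,x} of e^{θa}G(x−a), let f(x) be the largest minimiser, and set ξ := sup{ x ∈ ℕ : f(x) = 0 }. Assume ξ < ∞. Then for every x > ξ, f(x) = x − ξ. -/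
theorem stmt8 (θ : ℝ) (hθ : θ < 0) (G : ℕ → ℝ) (hG : ∀ n, 0 < G n)
    (J : ℕ → ℝ)
    (hJ : ∀ x : ℕ, J x = (Finset.range (x + 1)).inf'
      (Finset.nonempty_range_iff.mpr (Nat.succ_ne_zero x))
      (fun a => Real.exp (θ * a) * G (x - a)))
    (f : ℕ → ℕ)
    (hf1 : ∀ x, f x ≤ x)
    (hf2 : ∀ x, J x = Real.exp (θ * f x) * G (x - f x))
    (hf3 : ∀ x : ℕ, ∀ a : ℕ, a ≤ x → Real.exp (θ * a) * G (x - a) = J x → a ≤ f x)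
    (ξ : ℕ) (hξ0 : f ξ = 0) (hξub : ∀ x, f x = 0 → x ≤ ξ) :
    ∀ x : ℕ, ξ < x → f x = x - ξ := by
  have hle : ∀ x a : ℕ, a ≤ x → J x ≤ Real.exp (θ * a) * G (x - a) := by
    intro x a ha
    rw [hJ x]
    exact Finset.inf'_le _ (Finset.mem_range.mpr (Nat.lt_succ_of_le ha))
  -- Step 1: f (x - f x) = 0 for all x
  have step1 : ∀ x, f (x - f x) = 0 := by
    intro x
    set y := x - f x with hy
    by_contra hb
    have hb' : 0 < f y := Nat.pos_of_ne_zero hb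
    have hfy := hf1 y
    have hfx := hf1 x
    have h1 : f x + f y ≤ x := by omega
    have e1 : x - (f x + f y) = y - f y := by omega
    have esp : Real.exp (θ * ((f x : ℕ) + (f y : ℕ) : ℕ))
        = Real.exp (θ * f x) * Real.exp (θ * f y) := by
      rw [← Real.exp_add]; push_cast; ring_nf
    have key : Real.exp (θ * ((f x + f y : ℕ) : ℝ)) * G (x - (f x + f y)) = J x := by
      have hJy : J y ≤ G y := by
        have h0 := hle y 0 (Nat.zero_le y)
        simpa using h0
      have hdown : J x ≤ Real.exp (θ * f x) * J y := by
        calc J x ≤ Real.exp (θ * ((f x + f y : ℕ) : ℝ)) * G (x - (f x + f y)) := by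
              exact_mod_cast hle x (f x + f y) h1
          _ = Real.exp (θ * f x) * J y := by
              rw [e1, esp, hf2 y]; ring
      have hup : Real.exp (θ * f x) * J y ≤ J x := by
        calc Real.exp (θ * f x) * J y ≤ Real.exp (θ * f x) * G y :=
              mul_le_mul_of_nonneg_left hJy (Real.exp_pos _).le
          _ = J x := (hf2 x).symm
      have heq : J x = Real.exp (θ * f x) * J y := le_antisymm hdown hup
      rw [e1, esp, heq, hf2 y]; ring
    have := hf3 x (f x + f y) h1 (by exact_mod_cast key)
    omega
  intro x hx
  have hge : x - ξ ≤ f x := by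
    have h1 := hξub _ (step1 x)
    have h2 := hf1 x
    omega
  set b := f x - (x - ξ) with hbdef
  have hfx := hf1 x
  have hb1 : b ≤ ξ := by omega
  have hxi : x - ξ ≤ x := Nat.sub_le x ξ
  have hfxeq : f x = (x - ξ) + b := by omega
  have e2 : x - f x = ξ - b := by omega
  have hJx : J x = Real.exp (θ * ((x - ξ : ℕ) : ℝ)) * (Real.exp (θ * b) * G (ξ - b)) := by
    rw [hf2 x, e2, ← mul_assoc, ← Real.exp_add, hfxeq]
    push_cast
    ring_nf
  have hJξ : J ξ = G ξ := by
    rw [hf2 ξ, hξ0]; simp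
  have hJxle : J x ≤ Real.exp (θ * ((x - ξ : ℕ) : ℝ)) * G ξ := by
    have h := hle x (x - ξ) hxi
    have : x - (x - ξ) = ξ := by omega
    rwa [this] at h
  have hcancel : Real.exp (θ * b) * G (ξ - b) ≤ G ξ := by
    have hpos := Real.exp_pos (θ * ((x - ξ : ℕ) : ℝ))
    nlinarith [hJx, hJxle]
  have hJξle : J ξ ≤ Real.exp (θ * b) * G (ξ - b) := hle ξ b hb1
  have heq2 : Real.exp (θ * b) * G (ξ - b) = J ξ := by linarith [hJξ ▸ hJξle]
  have hb0 := hf3 ξ b hb1 heq2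
  omega
end

section
/- Fix γ ∈ (0,1), β ∈ (0,1), and let G : ℕ × [0,∞) → [0,∞). Define J(x,y) = β^γ · max over a ∈ {0,...,x} of G(x−a, (a+y)/β), and for each (x,y) let f(x,y) be the largest maximiser. Then f( x − f(x,y), y + f(x,y) ) = 0 for all x ∈ ℕ, y ≥ 0. -/
theorem stmt12 (γ β : ℝ) (hγ0 : 0 < γ) (hγ1 : γ < 1) (hβ0 : 0 < β) (hβ1 : β < 1)
    (G : ℕ → ℝ → ℝ) (hG : ∀ x : ℕ, ∀ y : ℝ, 0 ≤ y → 0 ≤ G x y)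
    (J : ℕ → ℝ → ℝ)
    (hJ : ∀ x : ℕ, ∀ y : ℝ, 0 ≤ y → J x y = β ^ γ * (Finset.range (x + 1)).sup'
      (Finset.nonempty_range_iff.mpr (Nat.succ_ne_zero x))
      (fun a => G (x - a) (((a : ℝ) + y) / β)))
    (f : ℕ → ℝ → ℕ)
    (hf1 : ∀ x : ℕ, ∀ y : ℝ, 0 ≤ y → f x y ≤ x)
    (hf2 : ∀ x : ℕ, ∀ y : ℝ, 0 ≤ y →
      J x y = β ^ γ * G (x - f x y) (((f x y : ℝ) + y) / β))
    (hf3 : ∀ x : ℕ, ∀ y : ℝ, 0 ≤ y → ∀ a : ℕ, a ≤ x →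
      β ^ γ * G (x - a) (((a : ℝ) + y) / β) = J x y → a ≤ f x y) :
    ∀ x : ℕ, ∀ y : ℝ, 0 ≤ y → f (x - f x y) (y + f x y) = 0 := by
  intro x y hy
  set F := f x y with hF
  have hFx : F ≤ x := hf1 x y hy
  set y' : ℝ := y + (F : ℝ) with hy'def
  have hy' : 0 ≤ y' := by positivity
  set b := f (x - F) y' with hb
  have hbx : b ≤ x - F := hf1 _ _ hy'
  have hβγ : 0 < β ^ γ := Real.rpow_pos_of_pos hβ0 γ
  -- (1) value of a = F + b at (x,y) is ≤ J x y
  have h1 : β ^ γ * G (x - (F + b)) ((((F + b : ℕ) : ℝ) + y) / β) ≤ J x y := by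
    rw [hJ x y hy]
    have hmem : F + b ∈ Finset.range (x + 1) := by
      simp only [Finset.mem_range]; omega
    have := Finset.le_sup' (fun a => G (x - a) (((a : ℝ) + y) / β)) hmem
    exact mul_le_mul_of_nonneg_left this hβγ.le
  -- (2) J x y ≤ β^γ * (value of b at (x-F, y')) = value of F+b at (x,y)
  have h2 : J x y ≤ β ^ γ * G (x - (F + b)) ((((F + b : ℕ) : ℝ) + y) / β) := by
    have e1 : J x y ≤ J (x - F) y' := by
      rw [hf2 x y hy, hJ (x - F) y' hy']
      have hmem : 0 ∈ Finset.range (x - F + 1) := by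
        simp only [Finset.mem_range]; omega
      have h0 := Finset.le_sup' (fun a => G (x - F - a) (((a : ℝ) + y') / β)) hmem
      simp only [Nat.sub_zero, Nat.cast_zero] at h0
      have harg : ((F : ℝ) + y) / β = ((0 : ℝ) + y') / β := by
        rw [hy'def]; ring_nf
      rw [harg]
      exact mul_le_mul_of_nonneg_left h0 hβγ.le
    have e2 : J (x - F) y' = β ^ γ * G (x - (F + b)) ((((F + b : ℕ) : ℝ) + y) / β) := by
      rw [hf2 (x - F) y' hy']
      have hsub : x - F - b = x - (F + b) := by omega
      have harg : ((b : ℝ) + y') / β = (((F + b : ℕ) : ℝ) + y) / β := by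
        rw [hy'def]; push_cast; ring_nf
      rw [← hb, hsub, harg]
    calc J x y ≤ J (x - F) y' := e1
      _ = _ := e2
  have heq : β ^ γ * G (x - (F + b)) ((((F + b : ℕ) : ℝ) + y) / β) = J x y :=
    le_antisymm h1 h2
  have hle : F + b ≤ F := hf3 x y hy (F + b) (by omega) heq
  omega
end

section
/- Fix γ ∈ (0,1), β ∈ (0,1), and let G : ℕ × [0,∞) → [0,∞). Define J(x,y) = β^γ · max over a ∈ {0,...,x} of G(x−a, (a+y)/β), and let f(x,y) be the largest maximiser. Let x₀ ∈ ℕ and y₀ ≥ 1. If f(x₀, y₀) = a₀ and f(x₀+1, y₀−1) > 0, then f(x₀+1, y₀−1) = a₀ + 1. -/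
theorem stmt13 (γ β : ℝ) (hγ0 : 0 < γ) (hγ1 : γ < 1) (hβ0 : 0 < β) (hβ1 : β < 1)
    (G : ℕ → ℝ → ℝ) (hG : ∀ x : ℕ, ∀ y : ℝ, 0 ≤ y → 0 ≤ G x y)
    (J : ℕ → ℝ → ℝ)
    (hJ : ∀ x : ℕ, ∀ y : ℝ, 0 ≤ y → J x y = β ^ γ * (Finset.range (x + 1)).sup'
      (Finset.nonempty_range_iff.mpr (Nat.succ_ne_zero x))
      (fun a => G (x - a) (((a : ℝ) + y) / β)))
    (f : ℕ → ℝ → ℕ)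
    (hf1 : ∀ x : ℕ, ∀ y : ℝ, 0 ≤ y → f x y ≤ x)
    (hf2 : ∀ x : ℕ, ∀ y : ℝ, 0 ≤ y →
      J x y = β ^ γ * G (x - f x y) (((f x y : ℝ) + y) / β))
    (hf3 : ∀ x : ℕ, ∀ y : ℝ, 0 ≤ y → ∀ a : ℕ, a ≤ x →
      β ^ γ * G (x - a) (((a : ℝ) + y) / β) = J x y → a ≤ f x y)
    (x₀ a₀ : ℕ) (y₀ : ℝ) (hy₀ : 1 ≤ y₀)
    (h0 : f x₀ y₀ = a₀) (h1 : 0 < f (x₀ + 1) (y₀ - 1)) :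
    f (x₀ + 1) (y₀ - 1) = a₀ + 1 := by
  have hy0 : (0:ℝ) ≤ y₀ := le_trans zero_le_one hy₀
  have hy1 : (0:ℝ) ≤ y₀ - 1 := by linarith
  have hpow : (0:ℝ) < β ^ γ := Real.rpow_pos_of_pos hβ0 γ
  set b := f (x₀ + 1) (y₀ - 1) with hb
  have hbx : b ≤ x₀ + 1 := hf1 _ _ hy1
  have hb1 : 1 ≤ b := h1
  have ha0x : a₀ ≤ x₀ := h0 ▸ hf1 _ _ hy0
  -- shift identity
  have hshift : ∀ a : ℕ, G ((x₀ + 1) - (a + 1)) ((((a + 1 : ℕ) : ℝ) + (y₀ - 1)) / β)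
      = G (x₀ - a) (((a : ℝ) + y₀) / β) := by
    intro a
    have h1' : (x₀ + 1) - (a + 1) = x₀ - a := by omega
    have h2' : (((a + 1 : ℕ) : ℝ) + (y₀ - 1)) = ((a : ℝ) + y₀) := by push_cast; ring
    rw [h1', h2']
  -- J x₀ y₀ ≤ J (x₀+1) (y₀-1)
  have hle1 : J x₀ y₀ ≤ J (x₀ + 1) (y₀ - 1) := by
    rw [hJ x₀ y₀ hy0, hJ (x₀ + 1) (y₀ - 1) hy1]
    apply mul_le_mul_of_nonneg_left _ (le_of_lt hpow)
    apply Finset.sup'_le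
    intro a ha
    have haU : a + 1 ∈ Finset.range (x₀ + 1 + 1) := by
      simp only [Finset.mem_range] at ha ⊢; omega
    calc G (x₀ - a) (((a : ℝ) + y₀) / β)
        = G ((x₀ + 1) - (a + 1)) ((((a + 1 : ℕ) : ℝ) + (y₀ - 1)) / β) := (hshift a).symm
      _ ≤ _ := Finset.le_sup' (fun a => G ((x₀ + 1) - a) (((a : ℝ) + (y₀ - 1)) / β)) haU
  -- J (x₀+1) (y₀-1) ≤ J x₀ y₀
  have hbval : G ((x₀ + 1) - b) (((b : ℝ) + (y₀ - 1)) / β)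
      = G (x₀ - (b - 1)) ((((b - 1 : ℕ) : ℝ) + y₀) / β) := by
    have hb' : b - 1 + 1 = b := by omega
    have := hshift (b - 1)
    rw [hb'] at this
    exact this
  have hle2 : J (x₀ + 1) (y₀ - 1) ≤ J x₀ y₀ := by
    rw [hf2 (x₀ + 1) (y₀ - 1) hy1, hJ x₀ y₀ hy0]
    apply mul_le_mul_of_nonneg_left _ (le_of_lt hpow)
    rw [← hb, hbval]
    have hmem : b - 1 ∈ Finset.range (x₀ + 1) := by
      simp only [Finset.mem_range]; omega
    exact Finset.le_sup' (fun a => G (x₀ - a) (((a : ℝ) + y₀) / β)) hmem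
  have heq : J (x₀ + 1) (y₀ - 1) = J x₀ y₀ := le_antisymm hle2 hle1
  -- b - 1 ≤ a₀
  have hb_le : b - 1 ≤ a₀ := by
    rw [← h0]
    apply hf3 x₀ y₀ hy0 (b - 1) (by omega)
    rw [← hbval, ← heq, hf2 (x₀ + 1) (y₀ - 1) hy1, hb]
  -- a₀ + 1 ≤ b
  have ha_le : a₀ + 1 ≤ b := by
    apply hf3 (x₀ + 1) (y₀ - 1) hy1 (a₀ + 1) (by omega)
    rw [hshift a₀, heq, hf2 x₀ y₀ hy0, h0]
  omega
end
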